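/- Let G be a finite simple graph, let {x,y} be an edge with D_x ≥ 1 and D_y ≥ 1, and let α ∈ [0,1). Then every coupling π of the α-lazy measures m_x^α and m_y^α has transport cost ∑_{(u,v)} π(u,v)·d(u,v) ≥ α + (1−α)·(D_x − 2 − D_{xy})/D_x. Equivalently, 1 − W_1(m_x^α, m_y^α) ≤ (1−α)·(D_{xy}+2)/D_x, where W_1 denotes the minimal transport cost over couplings. -/

import Mathlib

open Finset

namespace CurvGraph

variable {V : Type*} [Fintype V] [DecidableEq V]

/-- The `α`-lazy neighbour measure at `x`: mass `α` at `x` and `(1-α)/D_x` at each neighbour. -/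
noncomputable def lazy (G : SimpleGraph V) [DecidableRel G.Adj] (α : ℝ) (x : V) : V → ℝ :=
  fun v => if v = x then α else if G.Adj x v then (1 - α) / (G.degree x : ℝ) else 0

/-- `π` is a coupling of the measures `m1` and `m2` on `V`. -/
def IsCoupling (π : V × V → ℝ) (m1 m2 : V → ℝ) : Prop :=
  (∀ p, 0 ≤ π p) ∧ (∀ u, ∑ v, π (u, v) = m1 u) ∧ (∀ v, ∑ u, π (u, v) = m2 v)

/-- Transport cost of `π` with respect to the graph distance of `G`. -/
noncomputable def cost (G : SimpleGraph V) (π : V × V → ℝ) : ℝ :=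
  ∑ p : V × V, π p * (G.dist p.1 p.2 : ℝ)


/-- Deterministic Kantorovich–Rubinstein upper bound for curvature.
For an edge `{x,y}` and `α ∈ [0,1)`, every coupling of the lazy measures `m_x^α, m_y^α`
has transport cost at least `α + (1-α)·(D_x - 2 - D_{xy})/D_x`. -/
theorem coupling_cost_lower_bound
    (G : SimpleGraph V) [DecidableRel G.Adj] (x y : V) (hxy : G.Adj x y)
    (hDx : 1 ≤ G.degree x) (hDy : 1 ≤ G.degree y)
    (α : ℝ) (hα0 : 0 ≤ α) (hα1 : α < 1)
    (π : V × V → ℝ) (hπ : IsCoupling π (lazy G α x) (lazy G α y)) :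
    α + (1 - α) *
        (((G.degree x : ℝ) - 2 - ((G.neighborFinset x ∩ G.neighborFinset y).card : ℝ))
          / (G.degree x : ℝ))
      ≤ cost G π := by
  classical
  obtain ⟨hpos, h1, h2⟩ := hπ
  set g : V → ℝ := fun v => if v = y then 0 else if G.Adj y v then 1 else 2 with hgdef
  have hDx0 : (0:ℝ) < (G.degree x : ℝ) := by exact_mod_cast hDx
  have hDy0 : (0:ℝ) < (G.degree y : ℝ) := by exact_mod_cast hDy
  -- (A) pointwise bound
  have hA : ∀ p : V × V, π p * (g p.1 - g p.2) ≤ π p * (G.dist p.1 p.2 : ℝ) := by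
    rintro ⟨u, v⟩
    rcases eq_or_lt_of_le (hpos (u, v)) with h0 | h0
    · simp [← h0]
    have hu : u = x ∨ G.Adj x u := by
      by_contra hc
      push_neg at hc
      have hz : lazy G α x u = 0 := by simp [lazy, hc.1, hc.2]
      have hle : π (u, v) ≤ lazy G α x u := by
        rw [← h1 u]
        exact Finset.single_le_sum (fun i _ => hpos (u, i)) (mem_univ v)
      linarith
    have hv : v = y ∨ G.Adj y v := by
      by_contra hc
      push_neg at hc
      have hz : lazy G α y v = 0 := by simp [lazy, hc.1, hc.2]
      have hle : π (u, v) ≤ lazy G α y v := by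
        rw [← h2 v]
        exact Finset.single_le_sum (fun i _ => hpos (i, v)) (mem_univ u)
      linarith
    have hreach : G.Reachable u v := by
      have hux : G.Reachable u x := by
        rcases hu with rfl | h
        · exact SimpleGraph.Reachable.refl _
        · exact (G.adj_symm h).reachable
      have hyv : G.Reachable y v := by
        rcases hv with rfl | h
        · exact SimpleGraph.Reachable.refl _
        · exact h.reachable
      exact hux.trans (hxy.reachable.trans hyv)
    apply mul_le_mul_of_nonneg_left _ (le_of_lt h0)
    show g u - g v ≤ (G.dist u v : ℝ)
    have hgu2 : g u ≤ 2 := by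
      simp only [hgdef]
      split_ifs <;> norm_num
    have hgv0 : 0 ≤ g v := by
      simp only [hgdef]
      split_ifs <;> norm_num
    by_cases huv : u = v
    · subst huv
      simp [SimpleGraph.dist_self]
    have hd1 : 1 ≤ G.dist u v := hreach.pos_dist_of_ne huv
    have hd1' : (1:ℝ) ≤ (G.dist u v : ℝ) := by exact_mod_cast hd1
    rcases hv with hvy | hadjv
    · -- v = y, g v = 0
      have hgv : g v = 0 := by simp [hgdef, hvy]
      rw [hgv, sub_zero]
      by_cases hadj : G.Adj y u
      · have : g u = 1 := by
          have : u ≠ y := fun h => G.irrefl (h ▸ hadj)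
          simp [hgdef, this, hadj]
        linarith
      · have huy : u ≠ y := fun h => huv (h.trans hvy.symm)
        have hgu : g u = 2 := by simp [hgdef, huy, hadj]
        have hd2 : G.dist u v ≠ 1 := by
          intro h
          exact hadj (hvy ▸ G.adj_symm ((SimpleGraph.dist_eq_one_iff_adj).mp h))
        have : 2 ≤ G.dist u v := by omega
        have h2' : (2:ℝ) ≤ (G.dist u v : ℝ) := by exact_mod_cast this
        linarith
    · -- v adjacent to y, g v = 1
      have hvy : v ≠ y := fun h => G.irrefl (h ▸ hadjv)
      have hgv : g v = 1 := by simp [hgdef, hvy, hadjv]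
      rw [hgv]
      linarith
  -- (B) sum rearrangement
  have hB : ∑ p : V × V, π p * (g p.1 - g p.2)
      = ∑ u, lazy G α x u * g u - ∑ v, lazy G α y v * g v := by
    have e : ∀ p : V × V, π p * (g p.1 - g p.2) = π p * g p.1 - π p * g p.2 := by
      intro p; ring
    simp_rw [e]
    rw [Finset.sum_sub_distrib]
    congr 1
    · rw [Fintype.sum_prod_type]
      refine Finset.sum_congr rfl fun u _ => ?_
      rw [← h1 u, Finset.sum_mul]
    · rw [Fintype.sum_prod_type_right]
      refine Finset.sum_congr rfl fun v _ => ?_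
      rw [← h2 v, Finset.sum_mul]
  -- (C) compute the two integrals
  have hsplit : ∀ (z : V) (hz : (0:ℝ) < (G.degree z : ℝ)),
      ∑ u, lazy G α z u * g u
        = α * g z + (1 - α) / (G.degree z : ℝ) * ∑ u ∈ G.neighborFinset z, g u := by
    intro z hz
    have e : ∀ u, lazy G α z u * g u
        = (if u = z then α * g z else 0)
          + (if G.Adj z u then (1 - α) / (G.degree z : ℝ) * g u else 0) := by
      intro u
      by_cases h : u = z
      · subst h; simp [lazy, G.irrefl]
      · by_cases h2 : G.Adj z u <;> simp [lazy, h, h2]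
    simp_rw [e]
    rw [Finset.sum_add_distrib, Finset.sum_ite_eq' Finset.univ z, if_pos (mem_univ z)]
    congr 1
    rw [Finset.sum_ite, Finset.sum_const_zero, add_zero, Finset.mul_sum]
    rw [SimpleGraph.neighborFinset_eq_filter]
  -- sum of g over N(x)
  have hgx : ∀ u, g u = 2 - 2 * (if u = y then (1:ℝ) else 0) - (if G.Adj y u then (1:ℝ) else 0) := by
    intro u
    by_cases h1' : u = y
    · subst h1'; simp [hgdef, G.irrefl]
    · by_cases h2' : G.Adj y u <;> simp [hgdef, h1', h2'] <;> norm_num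
  have hNx : ∑ u ∈ G.neighborFinset x, g u
      = 2 * (G.degree x : ℝ) - 2 - ((G.neighborFinset x ∩ G.neighborFinset y).card : ℝ) := by
    simp_rw [hgx]
    rw [Finset.sum_sub_distrib, Finset.sum_sub_distrib, Finset.sum_const]
    have hy : y ∈ G.neighborFinset x := by simp [hxy]
    rw [← Finset.mul_sum, Finset.sum_ite_eq' _ y, if_pos hy]
    have hset : (G.neighborFinset x).filter (fun u => G.Adj y u)
        = G.neighborFinset x ∩ G.neighborFinset y := by
      ext u
      simp [SimpleGraph.mem_neighborFinset, and_comm]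
    have : ∑ u ∈ G.neighborFinset x, (if G.Adj y u then (1:ℝ) else 0)
        = ((G.neighborFinset x ∩ G.neighborFinset y).card : ℝ) := by
      rw [Finset.sum_ite, Finset.sum_const_zero, add_zero, Finset.sum_const, hset]
      simp
    rw [this]
    simp [SimpleGraph.card_neighborFinset_eq_degree]
    ring
  have hNy : ∑ u ∈ G.neighborFinset y, g u = (G.degree y : ℝ) := by
    have : ∀ u ∈ G.neighborFinset y, g u = 1 := by
      intro u hu
      rw [SimpleGraph.mem_neighborFinset] at hu
      have : u ≠ y := (G.ne_of_adj hu).symm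
      simp [hgdef, this, hu]
    rw [Finset.sum_congr rfl this, Finset.sum_const]
    simp [SimpleGraph.card_neighborFinset_eq_degree]
  have hgxval : g x = 1 := by
    have hxny : x ≠ y := G.ne_of_adj hxy
    simp [hgdef, hxny, G.adj_symm hxy]
  have hgyval : g y = 0 := by simp [hgdef]
  have hfinal : ∑ u, lazy G α x u * g u - ∑ v, lazy G α y v * g v
      = α + (1 - α) *
        (((G.degree x : ℝ) - 2 - ((G.neighborFinset x ∩ G.neighborFinset y).card : ℝ))
          / (G.degree x : ℝ)) := by
    rw [hsplit x hDx0, hsplit y hDy0, hNx, hNy, hgxval, hgyval]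
    field_simp
    ring
  calc α + (1 - α) *
        (((G.degree x : ℝ) - 2 - ((G.neighborFinset x ∩ G.neighborFinset y).card : ℝ))
          / (G.degree x : ℝ))
      = ∑ p : V × V, π p * (g p.1 - g p.2) := by rw [hB, hfinal]
    _ ≤ cost G π := Finset.sum_le_sum fun p _ => hA p


end CurvGraph
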